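/- Let I = {I_m} be a filtration of a Noetherian ring R. Define J_m = {f ∈ R : f^r ∈ \overline{I_{rm}} for some r > 0} (the integral closure filtration IC(I)). Then ν̄_I = ν̄_{IC(I)}. -/

import Mathlib

open Filter Topology Polynomial
open scoped ENNReal NNReal

/-- A filtration `I = {I_m}` of ideals of `R`: `I_0 = R`, `I_{n+1} ⊆ I_n`,
and `I_m · I_n ⊆ I_{m+n}`. -/
structure RingFiltration (R : Type*) [CommRing R] where
  I : ℕ → Ideal R
  top_eq : I 0 = ⊤
  antitone_succ : ∀ n, I (n + 1) ≤ I n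
  mul_le : ∀ m n, I m * I n ≤ I (m + n)

namespace RingFiltration
variable {R : Type*} [CommRing R] (F : RingFiltration R)

/-- The order function `ν_I(f) = sup {m : f ∈ I_m}`, viewed in `[0,∞]`. -/
noncomputable def nu (f : R) : ℝ≥0∞ :=
  sSup ((fun m : ℕ => (m : ℝ≥0∞)) '' {m | f ∈ F.I m})

/-- The asymptotic Samuel function `ν̄_I(f) = lim_n ν_I(f^n)/n` (the limit exists and
equals the limsup used here to define it). -/
noncomputable def nubar (f : R) : ℝ≥0∞ :=
  Filter.limsup (fun n : ℕ => F.nu (f ^ n) / (n : ℝ≥0∞)) Filter.atTop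

end RingFiltration

/-- The integral closure of an ideal `J`: the set of `x` satisfying an equation
`x^n + a_1 x^{n-1} + ⋯ + a_n = 0` with `a_i ∈ J^i`. -/
def Ideal.intCl {R : Type*} [CommRing R] (J : Ideal R) : Set R :=
  {x | ∃ n : ℕ, 0 < n ∧ ∃ a : ℕ → R, (∀ i ∈ Finset.Icc 1 n, a i ∈ J ^ i) ∧
    x ^ n + ∑ i ∈ Finset.Icc 1 n, a i * x ^ (n - i) = 0}

/- ### Auxiliary lemmas -/

lemma RingFiltration.le_nu {R : Type*} [CommRing R] (F : RingFiltration R) {f : R} {m : ℕ}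
    (h : f ∈ F.I m) : (m : ℝ≥0∞) ≤ F.nu f :=
  le_sSup ⟨m, h, rfl⟩

lemma RingFiltration.pow_le_I {R : Type*} [CommRing R] (F : RingFiltration R) (a s : ℕ) :
    F.I a ^ s ≤ F.I (s * a) := by
  induction s with
  | zero => simp [Ideal.one_eq_top, F.top_eq]
  | succ s ih =>
    rw [pow_succ]
    calc F.I a ^ s * F.I a ≤ F.I (s * a) * F.I a := Ideal.mul_mono_left ih
      _ ≤ F.I (s * a + a) := F.mul_le _ _
      _ = F.I ((s + 1) * a) := by rw [Nat.succ_mul]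

/-- If `x` is integral over `J` then high powers of `x` lie in high powers of `J`. -/
lemma Ideal.intCl_pow {R : Type*} [CommRing R] {J : Ideal R} {x : R} (hx : x ∈ J.intCl) :
    ∃ d : ℕ, 0 < d ∧ ∀ k : ℕ, x ^ (d + k) ∈ J ^ (k + 1) := by
  obtain ⟨d, hd, a, ha, heq⟩ := hx
  obtain ⟨e, rfl⟩ : ∃ e, d = e + 1 := ⟨d - 1, by omega⟩
  refine ⟨e + 1, Nat.succ_pos _, ?_⟩
  set b : ℕ → R := fun j => -a (e + 1 - j) with hb
  have hbmem : ∀ j < e + 1, b j ∈ J ^ (e + 1 - j) := by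
    intro j hj
    exact neg_mem (ha (e + 1 - j) (by simp [Finset.mem_Icc]; omega))
  have hbase : x ^ (e + 1) = ∑ j ∈ Finset.range (e + 1), b j * x ^ j := by
    have h1 : x ^ (e + 1) = ∑ i ∈ Finset.Icc 1 (e + 1), -a i * x ^ (e + 1 - i) := by
      have h0 := eq_neg_of_add_eq_zero_left heq
      rw [h0, ← Finset.sum_neg_distrib]
      exact Finset.sum_congr rfl fun i _ => by ring
    rw [h1, ← Finset.Ico_add_one_right_eq_Icc, Finset.sum_Ico_eq_sum_range]
    rw [show e + 1 + 1 - 1 = e + 1 from rfl]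
    rw [← Finset.sum_range_reflect]
    refine Finset.sum_congr rfl fun j hj => ?_
    rw [Finset.mem_range] at hj
    have h2 : 1 + (e + 1 - 1 - j) = e + 1 - j := by omega
    have h3 : e + 1 - (e + 1 - j) = j := by omega
    rw [h2, h3]
  have main : ∀ k : ℕ, ∃ c : ℕ → R, (∀ j < e + 1, c j ∈ J ^ (e + 1 + k - j)) ∧
      x ^ (e + 1 + k) = ∑ j ∈ Finset.range (e + 1), c j * x ^ j := by
    intro k
    induction k with
    | zero =>
      refine ⟨b, fun j hj => ?_, by simpa using hbase⟩
      have := hbmem j hj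
      rwa [show e + 1 + 0 - j = e + 1 - j from by omega] at this
    | succ k ih =>
      obtain ⟨c, hc, hxc⟩ := ih
      refine ⟨fun j => (if 1 ≤ j then c (j - 1) else 0) + c e * b j, ?_, ?_⟩
      · intro j hj
        apply add_mem
        · by_cases h1 : 1 ≤ j
          · rw [if_pos h1]
            have := hc (j - 1) (by omega)
            rwa [show e + 1 + k - (j - 1) = e + 1 + (k + 1) - j from by omega] at this
          · rw [if_neg h1]; exact zero_mem _
        · have h1 : c e ∈ J ^ (k + 1) := by
            have := hc e (by omega)
            rwa [show e + 1 + k - e = k + 1 from by omega] at this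
          have h2 := hbmem j hj
          have h3 := Ideal.mul_mem_mul h1 h2
          rw [← pow_add] at h3
          rwa [show k + 1 + (e + 1 - j) = e + 1 + (k + 1) - j from by omega] at h3
      · have hstep : x ^ (e + 1 + (k + 1)) = (∑ j ∈ Finset.range (e + 1), c j * x ^ j) * x := by
          rw [← Nat.add_assoc, pow_succ, hxc]
        rw [hstep, Finset.sum_mul]
        have hrhs : ∑ j ∈ Finset.range (e + 1),
            ((if 1 ≤ j then c (j - 1) else 0) + c e * b j) * x ^ j
            = (∑ j ∈ Finset.range (e + 1), (if 1 ≤ j then c (j - 1) else 0) * x ^ j)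
              + c e * ∑ j ∈ Finset.range (e + 1), b j * x ^ j := by
          rw [Finset.mul_sum, ← Finset.sum_add_distrib]
          exact Finset.sum_congr rfl fun j _ => by ring
        rw [hrhs, ← hbase]
        rw [Finset.sum_range_succ' (fun j => (if 1 ≤ j then c (j - 1) else 0) * x ^ j) e]
        rw [Finset.sum_range_succ (fun j => c j * x ^ j * x) e]
        have hsucc : ∀ i ∈ Finset.range e,
            (if 1 ≤ i + 1 then c (i + 1 - 1) else 0) * x ^ (i + 1) = c i * x ^ (i + 1) := by
          intro i _
          rw [if_pos (by omega)]
          simp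
        have h0 : (if (1 : ℕ) ≤ 0 then c (0 - 1) else 0) * x ^ 0 = 0 := by simp
        rw [Finset.sum_congr rfl hsucc, h0, add_zero]
        have hcongr : ∀ j ∈ Finset.range e, c j * x ^ j * x = c j * x ^ (j + 1) :=
          fun j _ => by ring
        rw [Finset.sum_congr rfl hcongr, pow_succ]
        ring
  intro k
  obtain ⟨c, hc, hxc⟩ := main k
  rw [hxc]
  refine Ideal.sum_mem _ fun j hj => ?_
  rw [Finset.mem_range] at hj
  exact Ideal.mul_mem_right _ _
    (Ideal.pow_le_pow_right (by omega) (hc j hj))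

lemma aux_tendsto (m n r d : ℕ) (hn : 0 < n) (hr : 0 < r) (hd : 0 < d) :
    Tendsto (fun k : ℕ => (((k + 1) * (r * m) : ℕ) : ℝ≥0∞) / (((n * r * (d + k)) : ℕ) : ℝ≥0∞))
      atTop (𝓝 ((m : ℝ≥0∞) / n)) := by
  have key : Tendsto (fun k : ℕ => (((k + 1) * (r * m) : ℕ) : ℝ) / (((n * r * (d + k)) : ℕ) : ℝ))
      atTop (𝓝 ((m : ℝ) / n)) := by
    have h1 : Tendsto (fun k : ℕ => ((k : ℝ) + 1) / ((k : ℝ) + d)) atTop (𝓝 1) := by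
      have h2 := (tendsto_natCast_div_add_atTop ((d : ℝ) - 1)).comp (tendsto_add_atTop_nat 1)
      convert h2 using 2 with k
      simp only [Function.comp]
      push_cast
      ring_nf
    have h3 : Tendsto (fun k : ℕ => ((m : ℝ) / n) * (((k : ℝ) + 1) / ((k : ℝ) + d)))
        atTop (𝓝 ((m : ℝ) / n * 1)) := tendsto_const_nhds.mul h1
    rw [mul_one] at h3
    refine h3.congr fun k => ?_
    have hk : (k : ℝ) + d ≠ 0 := by positivity
    have hn' : (n : ℝ) ≠ 0 := Nat.cast_ne_zero.mpr hn.ne'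
    have hr' : (r : ℝ) ≠ 0 := Nat.cast_ne_zero.mpr hr.ne'
    push_cast
    field_simp
    ring
  have hden : ∀ k : ℕ, ((n * r * (d + k) : ℕ) : ℝ≥0) ≠ 0 := by
    intro k
    simp only [Ne, Nat.cast_eq_zero]
    positivity
  have hcoe : ∀ k : ℕ, (((k + 1) * (r * m) : ℕ) : ℝ≥0∞) / (((n * r * (d + k)) : ℕ) : ℝ≥0∞)
      = ((((k + 1) * (r * m) : ℕ) : ℝ≥0) / (((n * r * (d + k)) : ℕ) : ℝ≥0) : ℝ≥0) := by
    intro k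
    rw [ENNReal.coe_div (hden k)]
    norm_cast
  have hcoe2 : (m : ℝ≥0∞) / n = (((m : ℝ≥0) / (n : ℝ≥0) : ℝ≥0) : ℝ≥0∞) := by
    rw [ENNReal.coe_div (by simp [hn.ne'])]
    norm_cast
  simp only [hcoe, hcoe2]
  rw [ENNReal.tendsto_coe]
  rw [← NNReal.tendsto_coe]
  convert key using 2 with k <;> simp

/-- Let `I = {I_m}` be a filtration of a Noetherian ring `R` and let `IC(I)` be the
filtration with `J_m = {f : f^r ∈ \bar{I_{rm}} for some r > 0}`.  Then
`ν̄_I = ν̄_{IC(I)}`. -/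
theorem nubar_eq_nubar_IC {R : Type*} [CommRing R] [IsNoetherianRing R]
    (F G : RingFiltration R)
    (hG : ∀ m, (G.I m : Set R) =
      {f : R | ∃ r : ℕ, 0 < r ∧ f ^ r ∈ Ideal.intCl (F.I (r * m))}) (x : R) :
    F.nubar x = G.nubar x := by
  have hFG : ∀ m, F.I m ≤ G.I m := by
    intro m f hf
    have : f ∈ (G.I m : Set R) := by
      rw [hG]
      refine ⟨1, one_pos, 1, one_pos, fun _ => -f, ?_, ?_⟩
      · intro i hi
        simp only [Finset.mem_Icc] at hi
        obtain rfl : i = 1 := by omega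
        rw [pow_one]
        exact neg_mem (by rwa [one_mul])
      · simp
    exact this
  refine le_antisymm ?_ ?_
  · -- F.nubar x ≤ G.nubar x
    refine Filter.limsup_le_limsup (Filter.Eventually.of_forall fun n => ?_)
    exact ENNReal.div_le_div_right
      (sSup_le_sSup (Set.image_mono fun m hm => hFG m hm)) _
  · -- G.nubar x ≤ F.nubar x
    set L := F.nubar x with hL
    refine Filter.limsup_le_of_le (by isBoundedDefault) ?_
    filter_upwards [Filter.eventually_ge_atTop 1] with n hn
    have hn0 : 0 < n := hn
    have key : G.nu (x ^ n) ≤ L * n := by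
      refine sSup_le ?_
      rintro _ ⟨m, hm, rfl⟩
      have hm' : x ^ n ∈ (G.I m : Set R) := hm
      rw [hG] at hm'
      obtain ⟨r, hr, hint⟩ := hm'
      obtain ⟨d, hd, hpow⟩ := Ideal.intCl_pow hint
      have hmem : ∀ k : ℕ, x ^ (n * r * (d + k)) ∈ F.I ((k + 1) * (r * m)) := by
        intro k
        have h1 := (F.pow_le_I (r * m) (k + 1)) (hpow k)
        rw [← pow_mul, ← pow_mul] at h1
        rwa [show n * (r * (d + k)) = n * r * (d + k) from by ring] at h1
      -- m ≤ L * n  iff  m / n ≤ L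
      rw [← ENNReal.div_le_iff_le_mul (Or.inl (by simpa using hn0.ne'))
        (Or.inl (by simp))]
      -- show (m : ℝ≥0∞) / n ≤ L
      refine le_of_forall_lt_imp_le_of_dense fun c hc => ?_
      refine Filter.le_limsup_of_frequently_le ?_ (by isBoundedDefault)
      have htend := aux_tendsto m n r d hn0 hr hd
      have hev : ∀ᶠ k in atTop,
          c < (((k + 1) * (r * m) : ℕ) : ℝ≥0∞) / (((n * r * (d + k)) : ℕ) : ℝ≥0∞) :=
        htend.eventually_const_lt hc
      rw [Filter.eventually_atTop] at hev
      obtain ⟨k₀, hk₀⟩ := hev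
      rw [Filter.frequently_atTop]
      intro N₀
      set k := max k₀ N₀ with hk
      refine ⟨n * r * (d + k), ?_, ?_⟩
      · calc N₀ ≤ k := le_max_right _ _
          _ ≤ d + k := by omega
          _ ≤ n * r * (d + k) := Nat.le_mul_of_pos_left _ (by positivity)
      · have h1 : c < (((k + 1) * (r * m) : ℕ) : ℝ≥0∞) / (((n * r * (d + k)) : ℕ) : ℝ≥0∞) :=
          hk₀ k (le_max_left _ _)
        have h2 : (((k + 1) * (r * m) : ℕ) : ℝ≥0∞) ≤ F.nu (x ^ (n * r * (d + k))) :=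
          F.le_nu (hmem k)
        calc c ≤ (((k + 1) * (r * m) : ℕ) : ℝ≥0∞) / (((n * r * (d + k)) : ℕ) : ℝ≥0∞) :=
            h1.le
          _ ≤ F.nu (x ^ (n * r * (d + k))) / (((n * r * (d + k)) : ℕ) : ℝ≥0∞) :=
            ENNReal.div_le_div_right h2 _
    calc G.nu (x ^ n) / (n : ℝ≥0∞) ≤ L * n / n := ENNReal.div_le_div_right key _
      _ = L := by
        rw [mul_div_assoc, ENNReal.div_self (by simpa using hn0.ne') (by simp),
          mul_one]
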